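/- Let n ≥ 2 be an integer, c > 0, and F(y) = (1/2)(y − 1)² + (1/c)[(y − 1) + (1 − y^{n+1})/(n+1)]. Suppose φ : ℝ → ℝ is continuously differentiable, even, satisfies φ(0) = φ_max with φ_max > 1, is strictly decreasing on (0, ∞) with φ(x) → 1 as x → +∞, and satisfies φ'(x) = −√(2 F(φ(x))) · φ(x)^{−n} for all x > 0. Then, as an equality of integrals of nonnegative functions with values in [0, ∞], ∫_ℝ [(1/2) φ(x)^{2n} φ'(x)² + (1/2)(φ(x) − 1)²] dx = 2 ∫_1^{φ_max} [F(y) + (1/2)(y − 1)²] · yⁿ · (2 F(y))^{−1/2} dy. -/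

import Mathlib

open MeasureTheory Filter Topology

/-- For an even, strictly decreasing (on `(0,∞)`) profile `φ` with
`φ(0) = φ_max > 1`, `φ → 1` at `+∞`, solving `φ' = -√(2F(φ)) φ^{-n}` on `(0,∞)`,
the generalized momentum equals `2∫_1^{φ_max} [F(y) + (1/2)(y-1)²] yⁿ (2F(y))^{-1/2} dy`,
as an equality of integrals of nonnegative functions with values in `[0,∞]`. -/
theorem stmt_4 (n : ℕ) (hn : 2 ≤ n) (c : ℝ) (hc : 0 < c)
    (F : ℝ → ℝ)
    (hF : ∀ y, F y = (1 / 2) * (y - 1) ^ 2 + (1 / c) * ((y - 1) + (1 - y ^ (n + 1)) / (n + 1)))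
    (φ : ℝ → ℝ) (φmax : ℝ)
    (hreg : ContDiff ℝ 1 φ) (heven : ∀ x, φ (-x) = φ x)
    (h0 : φ 0 = φmax) (hmax : 1 < φmax)
    (hanti : StrictAntiOn φ (Set.Ioi 0))
    (hlim : Tendsto φ atTop (𝓝 1))
    (hode : ∀ x, 0 < x → deriv φ x = -Real.sqrt (2 * F (φ x)) * φ x ^ (-(n : ℤ))) :
    ∫⁻ x : ℝ, ENNReal.ofReal
        ((1 / 2) * φ x ^ (2 * n) * (deriv φ x) ^ 2 + (1 / 2) * (φ x - 1) ^ 2) =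
      2 * ∫⁻ y in Set.Ioo (1 : ℝ) φmax, ENNReal.ofReal
        ((F y + (1 / 2) * (y - 1) ^ 2) * y ^ n * (2 * F y) ^ (-(1 / 2) : ℝ)) := by
  have hdiff : Differentiable ℝ φ := hreg.differentiable one_ne_zero
  have hcont : Continuous φ := hdiff.continuous
  -- φ > 1 on (0,∞)
  have hge1 : ∀ x, 0 < x → 1 ≤ φ x := by
    intro x hx
    refine le_of_tendsto hlim ?_
    filter_upwards [eventually_gt_atTop x] with t ht
    exact (hanti (Set.mem_Ioi.mpr hx) (Set.mem_Ioi.mpr (hx.trans ht)) ht).le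
  have hgt1 : ∀ x, 0 < x → 1 < φ x := by
    intro x hx
    calc (1:ℝ) ≤ φ (x + 1) := hge1 _ (by linarith)
    _ < φ x := hanti (Set.mem_Ioi.mpr hx) (Set.mem_Ioi.mpr (by linarith)) (by linarith)
  have hpos : ∀ x, 0 < x → 0 < φ x := fun x hx => lt_trans one_pos (hgt1 x hx)
  -- φ < φmax on (0,∞)
  have hltmax : ∀ x, 0 < x → φ x < φmax := by
    intro x hx
    have h2 : φ x < φ (x / 2) :=
      hanti (Set.mem_Ioi.mpr (by linarith)) (Set.mem_Ioi.mpr hx) (by linarith)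
    have h3 : φ (x / 2) ≤ φ 0 := by
      have hcc : Tendsto φ (𝓝[>] (0:ℝ)) (𝓝 (φ 0)) :=
        (hcont.tendsto 0).mono_left nhdsWithin_le_nhds
      refine ge_of_tendsto hcc ?_
      filter_upwards [Ioo_mem_nhdsGT_of_mem
        (show (0:ℝ) ∈ Set.Ico (0:ℝ) (x/2) from ⟨le_rfl, by linarith⟩)] with t ht
      exact (hanti (Set.mem_Ioi.mpr ht.1) (Set.mem_Ioi.mpr (by linarith)) ht.2).le
    rw [h0] at h3; linarith
  -- image of (0,∞) is (1, φmax)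
  have himage : φ '' Set.Ioi 0 = Set.Ioo 1 φmax := by
    apply Set.Subset.antisymm
    · rintro y ⟨x, hx, rfl⟩
      exact ⟨hgt1 x hx, hltmax x hx⟩
    · rintro y ⟨hy1, hy2⟩
      have h1 : ∀ᶠ t in 𝓝[>] (0:ℝ), y < φ t := by
        have hcc : Tendsto φ (𝓝[>] (0:ℝ)) (𝓝 φmax) := by
          rw [← h0]; exact (hcont.tendsto 0).mono_left nhdsWithin_le_nhds
        exact hcc.eventually (eventually_gt_nhds hy2)
      obtain ⟨x0, hx0y, hx0pos⟩ := (h1.and self_mem_nhdsWithin).exists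
      have h2 : ∀ᶠ t in atTop, φ t < y := hlim.eventually (eventually_lt_nhds hy1)
      obtain ⟨X, hX1, hX2⟩ := (h2.and (eventually_ge_atTop (x0 + 1))).exists
      have hsub : Set.Icc (φ X) (φ x0) ⊆ φ '' Set.Icc x0 X :=
        intermediate_value_Icc' (by linarith) hcont.continuousOn
      obtain ⟨x, hx, hxy⟩ := hsub ⟨hX1.le, hx0y.le⟩
      exact ⟨x, Set.mem_Ioi.mpr (lt_of_lt_of_le hx0pos hx.1), hxy⟩
  -- F ∘ φ is nonnegative on (0,∞)
  have hFcont : Continuous fun x => F (φ x) := by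
    have : (fun x => F (φ x)) =
        fun x => (1/2) * (φ x - 1)^2 + (1/c) * ((φ x - 1) + (1 - φ x ^ (n+1)) / (n+1)) :=
      funext fun x => hF _
    rw [this]
    fun_prop
  have hF0 : ∀ x, 0 < x → 0 ≤ F (φ x) := by
    intro x hx
    by_contra hneg
    push_neg at hneg
    have hopen : IsOpen {t : ℝ | 0 < t ∧ F (φ t) < 0} := by
      have : {t : ℝ | 0 < t ∧ F (φ t) < 0} = Set.Ioi 0 ∩ (fun t => F (φ t)) ⁻¹' Set.Iio 0 := by
        ext t; simp [Set.mem_Ioi, Set.mem_Iio, and_comm]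
      rw [this]
      exact isOpen_Ioi.inter (isOpen_Iio.preimage hFcont)
    obtain ⟨ε, hε, hball⟩ := Metric.isOpen_iff.mp hopen x ⟨hx, hneg⟩
    have hmemS : ∀ t, t ∈ Set.Icc (x - ε/2) (x + ε/2) → 0 < t ∧ F (φ t) < 0 := by
      intro t ht
      apply hball
      rw [Metric.mem_ball, Real.dist_eq, abs_lt]
      constructor <;> [linarith [ht.1]; linarith [ht.2]]
    have hab : x - ε/2 < x + ε/2 := by linarith
    obtain ⟨d, hd, hslope⟩ := exists_deriv_eq_slope φ hab hcont.continuousOn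
      (hdiff.differentiableOn)
    have hdS := hmemS d ⟨hd.1.le, hd.2.le⟩
    have hder0 : deriv φ d = 0 := by
      rw [hode d hdS.1, Real.sqrt_eq_zero'.mpr (by linarith [hdS.2]), neg_zero, zero_mul]
    rw [hder0] at hslope
    have heq : φ (x + ε/2) - φ (x - ε/2) = 0 := by
      rcases div_eq_zero_iff.mp hslope.symm with h | h
      · exact h
      · exfalso; linarith
    have hlt := hanti (Set.mem_Ioi.mpr (hmemS _ ⟨le_rfl, by linarith⟩).1)
      (Set.mem_Ioi.mpr (hmemS _ ⟨by linarith, le_rfl⟩).1) hab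
    linarith
  -- the exceptional set {x > 0 | F (φ x) = 0} is finite
  have hn1 : ((n:ℝ) + 1) ≠ 0 := by positivity
  have hEfin : {x : ℝ | 0 < x ∧ F (φ x) = 0}.Finite := by
    set p : Polynomial ℝ := Polynomial.C (1/2) * (Polynomial.X - 1)^2 +
      Polynomial.C (1/c) * ((Polynomial.X - 1) +
        Polynomial.C (((n:ℝ) + 1)⁻¹) * (1 - Polynomial.X^(n+1))) with hp
    have heval : ∀ y, p.eval y = F y := by
      intro y
      rw [hF y, hp]
      simp only [Polynomial.eval_add, Polynomial.eval_mul, Polynomial.eval_pow,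
        Polynomial.eval_sub, Polynomial.eval_C, Polynomial.eval_X, Polynomial.eval_one]
      field_simp
    have hcoeff : p.coeff (n+1) = (1/c) * (((n:ℝ) + 1)⁻¹ * (-1)) := by
      have hXd : (Polynomial.X - 1 : Polynomial ℝ).natDegree = 1 := by
        simpa using Polynomial.natDegree_X_sub_C (1:ℝ)
      have hd1 : ((Polynomial.X - 1 : Polynomial ℝ)^2).natDegree < n + 1 := by
        have h := Polynomial.natDegree_pow_le (p := (Polynomial.X - 1 : Polynomial ℝ)) (n := 2)
        rw [hXd] at h
        omega
      have hd2 : (Polynomial.X - 1 : Polynomial ℝ).natDegree < n + 1 := by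
        rw [hXd]; omega
      rw [hp]
      rw [Polynomial.coeff_add, Polynomial.coeff_C_mul, Polynomial.coeff_C_mul,
        Polynomial.coeff_add, Polynomial.coeff_C_mul,
        Polynomial.coeff_eq_zero_of_natDegree_lt hd1,
        Polynomial.coeff_eq_zero_of_natDegree_lt hd2,
        Polynomial.coeff_sub, Polynomial.coeff_one, Polynomial.coeff_X_pow]
      simp [Nat.succ_ne_zero]
    have hpne : p ≠ 0 := by
      intro h
      rw [h] at hcoeff
      simp only [Polynomial.coeff_zero] at hcoeff
      have : (1/c) * (((n:ℝ) + 1)⁻¹ * (-1)) ≠ 0 := by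
        apply mul_ne_zero (by positivity)
        apply mul_ne_zero (by positivity)
        norm_num
      exact this hcoeff.symm
    have hZfin : {y : ℝ | F y = 0}.Finite := by
      have : {y : ℝ | F y = 0} = {y : ℝ | p.IsRoot y} := by
        ext y; simp [Polynomial.IsRoot, heval y]
      rw [this]
      exact Polynomial.finite_setOf_isRoot hpne
    apply Set.Finite.of_finite_image (f := φ)
    · apply hZfin.subset
      rintro y ⟨x, hx, rfl⟩
      exact hx.2
    · exact hanti.injOn.mono (fun x hx => hx.1)
  -- pointwise facts for a.e. x in (0,∞)
  have hEnull : (volume : Measure ℝ) {x : ℝ | 0 < x ∧ F (φ x) = 0} = 0 :=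
    hEfin.measure_zero _
  -- derivative of even function is odd
  have hderiv_neg : ∀ x : ℝ, deriv φ (-x) = -deriv φ x := by
    intro x
    have h1 := deriv_comp_neg φ x
    have h2 : (fun x => φ (-x)) = φ := funext heven
    rw [h2] at h1
    linarith
  -- split the LHS integral
  have hsplit : (∫⁻ x : ℝ, ENNReal.ofReal
        ((1 / 2) * φ x ^ (2 * n) * (deriv φ x) ^ 2 + (1 / 2) * (φ x - 1) ^ 2)) =
      2 * ∫⁻ x in Set.Ioi (0:ℝ), ENNReal.ofReal
        ((1 / 2) * φ x ^ (2 * n) * (deriv φ x) ^ 2 + (1 / 2) * (φ x - 1) ^ 2) := by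
    set f : ℝ → ENNReal := fun x => ENNReal.ofReal
      ((1 / 2) * φ x ^ (2 * n) * (deriv φ x) ^ 2 + (1 / 2) * (φ x - 1) ^ 2) with hf
    have h1 : ∫⁻ x in Set.Iio (0:ℝ), f x = ∫⁻ x in Set.Ioi (0:ℝ), f x := by
      have hemb : MeasurableEmbedding (Neg.neg : ℝ → ℝ) :=
        (Homeomorph.neg ℝ).measurableEmbedding
      have hmp := (Measure.measurePreserving_neg (volume : Measure ℝ)).setLIntegral_comp_preimage_emb
        hemb f (Set.Iio 0)
      have hpre : (Neg.neg : ℝ → ℝ) ⁻¹' Set.Iio 0 = Set.Ioi 0 := by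
        ext t; simp
      rw [hpre] at hmp
      rw [← hmp]
      refine lintegral_congr fun x => ?_
      simp only [hf, heven, hderiv_neg, neg_sq]
    rw [← lintegral_add_compl f (measurableSet_Iio (a := (0:ℝ))), Set.compl_Iio, h1,
      Measure.restrict_congr_set Ioi_ae_eq_Ici.symm, two_mul]
  rw [hsplit]
  -- change of variables on the RHS
  have hchg : (∫⁻ y in Set.Ioo (1 : ℝ) φmax, ENNReal.ofReal
        ((F y + (1 / 2) * (y - 1) ^ 2) * y ^ n * (2 * F y) ^ (-(1 / 2) : ℝ))) =
      ∫⁻ x in Set.Ioi (0:ℝ), ENNReal.ofReal |deriv φ x| * ENNReal.ofReal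
        ((F (φ x) + (1 / 2) * (φ x - 1) ^ 2) * φ x ^ n * (2 * F (φ x)) ^ (-(1 / 2) : ℝ)) := by
    rw [← himage]
    have := lintegral_image_eq_lintegral_abs_det_fderiv_mul (volume : Measure ℝ)
      (measurableSet_Ioi (a := (0:ℝ)))
      (fun x _ => (hasDerivAt_iff_hasFDerivAt.mp (hdiff x).hasDerivAt).hasFDerivWithinAt)
      hanti.injOn
      (fun y => ENNReal.ofReal ((F y + (1 / 2) * (y - 1) ^ 2) * y ^ n * (2 * F y) ^ (-(1 / 2) : ℝ)))
    simpa only [ContinuousLinearMap.det_toSpanSingleton] using this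
  rw [hchg]
  congr 1
  -- a.e. pointwise identity on (0,∞)
  apply lintegral_congr_ae
  have hnmem : ∀ᵐ x : ℝ, x ∉ {x : ℝ | 0 < x ∧ F (φ x) = 0} :=
    measure_eq_zero_iff_ae_notMem.mp hEnull
  filter_upwards [ae_restrict_mem (measurableSet_Ioi (a := (0:ℝ))), ae_restrict_of_ae hnmem]
    with x hx hnx
  have hx0 : (0:ℝ) < x := hx
  have hFne : F (φ x) ≠ 0 := fun h => hnx ⟨hx0, h⟩
  have hFpos : 0 < F (φ x) := lt_of_le_of_ne (hF0 x hx0) (Ne.symm hFne)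
  have hy0 : (0:ℝ) < φ x := hpos x hx0
  have h2F : (0:ℝ) < 2 * F (φ x) := by linarith
  set A : ℝ := φ x ^ n with hA
  have hApos : 0 < A := pow_pos hy0 n
  have hz : φ x ^ (-(n:ℤ)) = A⁻¹ := by
    rw [zpow_neg, zpow_natCast]
  have key : (1/2:ℝ) * φ x ^ (2*n) * (deriv φ x)^2 = F (φ x) := by
    rw [hode x hx0, hz, mul_pow, neg_sq, Real.sq_sqrt h2F.le]
    rw [pow_mul']
    rw [← hA]
    field_simp
  have habs : |deriv φ x| = Real.sqrt (2 * F (φ x)) * A⁻¹ := by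
    rw [hode x hx0, hz, neg_mul, abs_neg, abs_of_nonneg (by positivity)]
  have hrw : Real.sqrt (2 * F (φ x)) * (2 * F (φ x)) ^ (-(1/2):ℝ) = 1 := by
    rw [Real.sqrt_eq_rpow, ← Real.rpow_add h2F]
    norm_num
  rw [← ENNReal.ofReal_mul (abs_nonneg _)]
  congr 1
  rw [key, habs]
  have hexp : Real.sqrt (2 * F (φ x)) * A⁻¹ *
      ((F (φ x) + 1 / 2 * (φ x - 1) ^ 2) * A * (2 * F (φ x)) ^ (-(1/2):ℝ)) =
      (F (φ x) + 1 / 2 * (φ x - 1) ^ 2) * (A⁻¹ * A) *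
        (Real.sqrt (2 * F (φ x)) * (2 * F (φ x)) ^ (-(1/2):ℝ)) := by ring
  rw [hexp, hrw, inv_mul_cancel₀ hApos.ne', mul_one, mul_one]
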